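/- For every t ∈ ℝ and every (z₁, z₂, w) ∈ M_LC such that D := (1 + z₂) + (1 − z₂)e^{2t} ≠ 0, the rigid holomorphic map φ_t(z₁, z₂, w) = ( 2z₁e^t/D, ((1 + z₂) − (1 − z₂)e^{2t})/D, w − z₁²/(1 − z₂) + 2z₁²/((1 − z₂)·D) ) satisfies φ_t(z₁, z₂, w) ∈ M_LC. (Note that z₂ ≠ 1 automatically, since z₂·conj(z₂) ≠ 1 on M_LC.) -/

import Mathlib

open Complex ComplexConjugate

noncomputable section

/-- The tube over the future light cone, in coordinates `(z₁, z₂, w)`: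
`Re w · (1 − z₂ z̄₂) = z₁ z̄₁ + Re (z₁² z̄₂)`, away from `z₂ z̄₂ = 1`. -/
def MLC : Set (ℂ × ℂ × ℂ) :=
  {p | p.2.1 * conj p.2.1 ≠ 1 ∧
    ((p.2.2.re : ℂ) * (1 - p.2.1 * conj p.2.1)
      = p.1 * conj p.1 + (((p.1 ^ 2 * conj p.2.1).re : ℂ)))}


set_option maxHeartbeats 4000000 in
set_option maxRecDepth 32000 in
lemma key_aux (w v z b s a e : ℂ)
    (hD : 1 + s + (1 - s) * e ^ 2 ≠ 0) (hDc : 1 + a + (1 - a) * e ^ 2 ≠ 0)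
    (hs1 : (1:ℂ) - s ≠ 0) (ha1 : (1:ℂ) - a ≠ 0)
    (H : (w + v) * (1 - s * a) = z * b * 2 + (z ^ 2 * a + b ^ 2 * s)) :
    (w - z ^ 2 / (1 - s) + 2 * z ^ 2 / ((1 - s) * (1 + s + (1 - s) * e ^ 2)) +
        (v - b ^ 2 / (1 - a) + 2 * b ^ 2 / ((1 - a) * (1 + a + (1 - a) * e ^ 2)))) / 2 *
      (1 - (1 + s - (1 - s) * e ^ 2) / (1 + s + (1 - s) * e ^ 2) *
        ((1 + a - (1 - a) * e ^ 2) / (1 + a + (1 - a) * e ^ 2))) =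
    2 * z * e / (1 + s + (1 - s) * e ^ 2) * (2 * b * e / (1 + a + (1 - a) * e ^ 2)) +
      ((2 * z * e / (1 + s + (1 - s) * e ^ 2)) ^ 2 *
          ((1 + a - (1 - a) * e ^ 2) / (1 + a + (1 - a) * e ^ 2)) +
        (2 * b * e / (1 + a + (1 - a) * e ^ 2)) ^ 2 *
          ((1 + s - (1 - s) * e ^ 2) / (1 + s + (1 - s) * e ^ 2))) / 2 := by
  set D := 1 + s + (1 - s) * e ^ 2 with hd
  set Dc := 1 + a + (1 - a) * e ^ 2 with hdc
  set P := (1:ℂ) - s with hp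
  set A := (1:ℂ) - a with ha
  have l1 : w - z ^ 2 / P + 2 * z ^ 2 / (P * D) = w + z ^ 2 * (1 - e ^ 2) / D := by
    field_simp
    rw [hd, hp]
    ring
  have l2 : v - b ^ 2 / A + 2 * b ^ 2 / (A * Dc) = v + b ^ 2 * (1 - e ^ 2) / Dc := by
    field_simp
    rw [hdc, ha]
    ring
  have l3 : 1 - (1 + s - P * e ^ 2) / D * ((1 + a - A * e ^ 2) / Dc)
      = 4 * e ^ 2 * (1 - s * a) / (D * Dc) := by
    field_simp
    rw [hd, hdc, hp, ha]
    ring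
  rw [l1, l2, l3]
  field_simp
  have hfr : ((2 * z * e) ^ 2 * (1 + a - A * e ^ 2) * (Dc ^ 2 * D)
        + (2 * b * e) ^ 2 * (1 + s - P * e ^ 2) * (D ^ 2 * Dc)) * (D * Dc)
        / (D ^ 2 * Dc * (Dc ^ 2 * D) * 2)
      = ((2 * z * e) ^ 2 * (1 + a - A * e ^ 2) * Dc + (2 * b * e) ^ 2 * (1 + s - P * e ^ 2) * D)
        / (D * Dc * 2) := by
    rw [div_eq_div_iff (by simp [hD, hDc, mul_eq_zero]) (by simp [hD, hDc, mul_eq_zero])]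
    ring
  linear_combination 4 * e ^ 2 * D * Dc * H
    + 4 * e ^ 2 * Dc * z ^ 2 * (a * hd + a * e ^ 2 * hp + e ^ 2 * ha)
    + 4 * e ^ 2 * D * b ^ 2 * (s * hdc + s * e ^ 2 * ha + e ^ 2 * hp)

private lemma re_half_aux (x : ℂ) : (x.re : ℂ) = (x + conj x) / 2 := by
  have h := Complex.add_conj x
  push_cast at h
  linear_combination -h/2

set_option maxHeartbeats 1600000 in
set_option maxRecDepth 8000 in
/-- For every `t ∈ ℝ` and `(z₁, z₂, w) ∈ M_LC` with `D = (1 + z₂) + (1 − z₂)e^{2t} ≠ 0`, the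
rigid holomorphic map
`φ_t(z₁, z₂, w) = (2z₁eᵗ/D, ((1 + z₂) − (1 − z₂)e^{2t})/D, w − z₁²/(1 − z₂) + 2z₁²/((1 − z₂)D))`
sends the point into `M_LC` again. -/
theorem rigid_flow_X6_maps_MLC (t : ℝ) (p : ℂ × ℂ × ℂ) (hp : p ∈ MLC)
    (hD : (1 + p.2.1) + (1 - p.2.1) * (Real.exp (2 * t) : ℂ) ≠ 0) :
    (2 * p.1 * (Real.exp t : ℂ) / ((1 + p.2.1) + (1 - p.2.1) * (Real.exp (2 * t) : ℂ)),
      ((1 + p.2.1) - (1 - p.2.1) * (Real.exp (2 * t) : ℂ))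
        / ((1 + p.2.1) + (1 - p.2.1) * (Real.exp (2 * t) : ℂ)),
      p.2.2 - p.1 ^ 2 / (1 - p.2.1)
        + 2 * p.1 ^ 2 / ((1 - p.2.1) * ((1 + p.2.1) + (1 - p.2.1) * (Real.exp (2 * t) : ℂ))))
      ∈ MLC := by
  obtain ⟨h1, h2⟩ := hp
  set z := p.1 with hz
  set s := p.2.1 with hs
  set w := p.2.2 with hw
  have hE2 : (Real.exp (2 * t) : ℂ) = (Real.exp t : ℂ) ^ 2 := by
    push_cast [two_mul, Real.exp_add]; ring
  set e : ℂ := (Real.exp t : ℂ) with he'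
  have he : e ≠ 0 := by
    simp [he', Complex.ofReal_ne_zero, Real.exp_ne_zero]
  have hce : conj e = e := Complex.conj_ofReal _
  rw [hE2] at hD ⊢
  have hcD : 1 + conj s + (1 - conj s) * e ^ 2 ≠ 0 := by
    intro h
    apply hD
    have := congrArg conj h
    simpa [hce] using this
  have hs1 : (1 : ℂ) - s ≠ 0 := by
    intro h
    apply h1
    have hss : s = 1 := by linear_combination -h
    rw [hss]; simp
  have hcs1 : (1 : ℂ) - conj s ≠ 0 := by
    intro h
    apply hs1
    have hcs : conj s = 1 := by linear_combination -h
    have := congrArg conj hcs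
    simp only [Complex.conj_conj, map_one] at this
    rw [this]; ring
  have hr : (1 : ℂ) - s * conj s ≠ 0 := sub_ne_zero.mpr (Ne.symm h1)
  constructor
  · intro h
    simp only [map_div₀, map_add, map_sub, map_mul, map_one, map_pow, hce] at h
    field_simp [hD, hcD] at h
    rw [div_eq_iff (by intro h0; apply hcD; linear_combination h0)] at h
    have h4 : (4 : ℂ) * e ^ 2 * (1 - s * conj s) = 0 := by linear_combination -h
    exact (mul_ne_zero (mul_ne_zero (by norm_num : (4:ℂ) ≠ 0) (pow_ne_zero 2 he)) hr) h4
  · rw [re_half_aux, re_half_aux] at h2 ⊢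
    simp only [map_add, map_sub, map_mul, map_div₀, map_pow, map_one, map_ofNat,
      Complex.conj_conj, hce] at h2 ⊢
    field_simp [hD, hcD, hs1, hcs1] at h2
    exact key_aux w (conj w) z (conj z) s (conj s) e hD hcD hs1 hcs1 (by linear_combination h2)
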